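/- The equation X⁴ + 2Y⁴ = Z² has no nontrivial rational solutions: if x, y, z ∈ ℚ satisfy x⁴ + 2y⁴ = z², then y = 0. -/

import Mathlib

private lemma odd_sq_mod8 {a : ℤ} (ha : Odd a) : a ^ 2 % 8 = 1 := by
  obtain ⟨k, rfl⟩ := ha
  obtain ⟨m, hm⟩ := Int.even_mul_succ_self k
  have h : (2 * k + 1) ^ 2 = 8 * m + 1 := by linear_combination 4 * hm
  rw [h]; omega

private lemma mod8_contra : ∀ A D E : ℤ, A % 8 = 1 → D % 8 = 1 → A + D = 8 * E → False := by
  intro A D E h1 h2 h3; omega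

private lemma eq_fourth_of_coprime {u v w : ℤ} (hc : IsCoprime u v) (hu : 0 < u)
    (h : u * v = w ^ 4) : ∃ r, u = r ^ 4 := by
  obtain ⟨d, hd⟩ := exists_associated_pow_of_mul_eq_pow' hc h
  obtain ⟨un, hun⟩ := hd
  rcases Int.units_eq_one_or un with h1 | h1 <;> rw [h1] at hun
  · exact ⟨d, by simpa using hun.symm⟩
  · exfalso
    have h4 : (0:ℤ) ≤ d ^ 4 := by positivity
    simp only [Units.val_neg, Units.val_one, mul_neg, mul_one] at hun
    nlinarith [hun, hu]

private lemma descent_step {a b C : ℤ} (hab : IsCoprime a b) (hb : b ≠ 0) (hCpos : 0 < C)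
    (h : a ^ 4 + 2 * b ^ 4 = C ^ 2) :
    ∃ r s d : ℤ, r ^ 4 + 2 * s ^ 4 = d ^ 2 ∧ s ≠ 0 ∧ d.natAbs < C.natAbs := by
  have hb4 : 0 < b ^ 4 := by positivity
  -- a is odd
  have ha_odd : Odd a := by
    rcases Int.even_or_odd a with he | ho
    · exfalso
      obtain ⟨α, rfl⟩ := he
      have hCe : Even (C ^ 2) := ⟨8 * α ^ 4 + b ^ 4, by linear_combination -h⟩
      have hCeven : Even C := (Int.even_pow.mp hCe).1
      obtain ⟨γ, rfl⟩ := hCeven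
      have hb2 : 2 * b ^ 4 = 2 * ((γ ^ 2 - 4 * α ^ 4) + (γ ^ 2 - 4 * α ^ 4)) := by
        linear_combination h
      have hbe : Even (b ^ 4) := ⟨γ ^ 2 - 4 * α ^ 4, mul_left_cancel₀ two_ne_zero hb2⟩
      have hbeven : Even b := (Int.even_pow.mp hbe).1
      obtain ⟨β, rfl⟩ := hbeven
      have : IsUnit (2 : ℤ) :=
        hab.isUnit_of_dvd' ⟨α, by ring⟩ ⟨β, by ring⟩
      rw [Int.isUnit_iff] at this; omega
    · exact ho
  -- C is odd
  have hC_odd : Odd C := by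
    rcases Int.even_or_odd C with he | ho
    · exfalso
      obtain ⟨γ, rfl⟩ := he
      have hb2 : 2 * a ^ 4 = 2 * ((γ ^ 2 + γ ^ 2 - b ^ 4) + (γ ^ 2 + γ ^ 2 - b ^ 4)) := by
        linear_combination 2 * h
      have hae : Even (a ^ 4) := ⟨γ ^ 2 + γ ^ 2 - b ^ 4, mul_left_cancel₀ two_ne_zero hb2⟩
      have : Even a := (Int.even_pow.mp hae).1
      exact (Int.not_odd_iff_even.mpr this) ha_odd
    · exact ho
  obtain ⟨u, hu⟩ := hC_odd.sub_odd (ha_odd.pow (n := 2))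
  obtain ⟨v, hv⟩ := hC_odd.add_odd (ha_odd.pow (n := 2))
  -- b^4 = 2uv
  have hbuv : b ^ 4 = 2 * (u * v) := by
    have h4 : 2 * (b ^ 4) = 2 * (2 * (u * v)) := by
      linear_combination h + (C + a ^ 2) * hu + (u + u) * hv
    exact mul_left_cancel₀ two_ne_zero h4
  have ha2 : a ^ 2 = v - u := by linarith
  -- b is even
  have hbe4 : Even (b ^ 4) := ⟨u * v, by linarith⟩
  have hbe : Even b := (Int.even_pow.mp hbe4).1
  obtain ⟨b₁, rfl⟩ := hbe
  have huv8 : u * v = 8 * b₁ ^ 4 := by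
    have h4 : 2 * (u * v) = 2 * (8 * b₁ ^ 4) := by linear_combination -hbuv
    exact mul_left_cancel₀ two_ne_zero h4
  -- coprimality of u v
  obtain ⟨x, y, hxy⟩ := (hab.pow : IsCoprime (a ^ 2) ((b₁ + b₁) ^ 4))
  have huv_cop : IsCoprime u v :=
    ⟨-x + 2 * y * v, x, by linear_combination hxy - x * ha2 - y * hbuv⟩
  -- positivity
  have hCa : a ^ 2 < C := by nlinarith [hb4, hCpos, sq_nonneg a]
  have hupos : 0 < u := by linarith
  have hvpos : 0 < v := by nlinarith [sq_nonneg a]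
  have hCuv : C = u + v := by linarith
  have hb1ne : b₁ ≠ 0 := fun h0 => by subst h0; simp at hb
  have hb1pos : 0 < b₁ ^ 4 := by positivity
  -- parity split on u
  rcases Int.even_or_odd u with hue | huo
  · -- good case: u even, v odd
    have hvodd : Odd v := by
      rcases Int.even_or_odd v with h' | h'
      · exact absurd (hCuv ▸ hue.add h') (Int.not_even_iff_odd.mpr hC_odd)
      · exact h'
    obtain ⟨k, hk⟩ := id hvodd
    have h2v : IsCoprime (2 : ℤ) v := ⟨-k, 1, by linear_combination hk⟩
    have h8v : IsCoprime (8 : ℤ) v := by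
      have := h2v.pow_left (m := 3); norm_num at this; exact this
    have h8u : (8 : ℤ) ∣ u := h8v.dvd_of_dvd_mul_right ⟨b₁ ^ 4, by linarith⟩
    obtain ⟨u₁, hu1⟩ := h8u
    have hu1v : u₁ * v = b₁ ^ 4 := by
      have h4 : (8 : ℤ) * (u₁ * v) = 8 * (b₁ ^ 4) := by linear_combination huv8 - v * hu1
      exact mul_left_cancel₀ (by norm_num) h4
    have hu1cop : IsCoprime u₁ v := by
      have : IsCoprime (8 * u₁) v := hu1 ▸ huv_cop
      exact this.of_mul_left_right
    have hu1pos : 0 < u₁ := by nlinarith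
    obtain ⟨e, he⟩ := eq_fourth_of_coprime hu1cop hu1pos hu1v
    obtain ⟨d, hdv⟩ := eq_fourth_of_coprime (w := b₁) hu1cop.symm hvpos
      (by linear_combination hu1v)
    have hd4 : d ^ 4 = a ^ 2 + 8 * e ^ 4 := by
      rw [← hdv, ← he]; linarith
    have hd_odd : Odd d := by
      rcases Int.even_or_odd d with h' | h'
      · exact absurd (hdv ▸ (Int.even_pow.mpr ⟨h', by norm_num⟩)) (Int.not_even_iff_odd.mpr hvodd)
      · exact h'
    have he_ne : e ≠ 0 := fun h0 => by subst h0; simp at he; omega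
    have he4pos : 0 < e ^ 4 := by positivity
    -- coprimality a d
    obtain ⟨x2, y2, hxy2⟩ := huv_cop
    have hcop_a2v : IsCoprime (a ^ 2) v :=
      ⟨-x2, x2 + y2, by linear_combination hxy2 - x2 * ha2⟩
    have had : IsCoprime a d := by
      have h1 : IsCoprime (a ^ 2) (d ^ 4) := hdv ▸ hcop_a2v
      exact ((IsCoprime.pow_left_iff (by norm_num)).mp
        ((IsCoprime.pow_right_iff (by norm_num)).mp h1))
    -- second factorization
    obtain ⟨p, hp⟩ := ((hd_odd.pow (n := 2)).sub_odd ha_odd)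
    obtain ⟨q, hq⟩ := ((hd_odd.pow (n := 2)).add_odd ha_odd)
    have hpq : p * q = 2 * e ^ 4 := by
      have h4 : 2 * (p * q) = 2 * (2 * e ^ 4) := by
        have h8 : 4 * (p * q) = 4 * (2 * e ^ 4) := by
          linear_combination -(d ^ 2 + a) * hp - (p + p) * hq + hd4
        linarith
      exact mul_left_cancel₀ two_ne_zero h4
    have hd2abs : a ^ 2 < (d ^ 2) ^ 2 := by nlinarith
    have habs : |a| < d ^ 2 := by nlinarith [abs_nonneg a, sq_abs a, sq_nonneg (d ^ 2)]
    have hppos : 0 < p := by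
      have := le_abs_self a; linarith
    have hqpos : 0 < q := by
      have := neg_abs_le a; linarith
    have hqp : q - p = a := by linarith
    have hqp2 : q + p = d ^ 2 := by linarith
    obtain ⟨x3, y3, hxy3⟩ := had.pow_right (n := 2)
    have hpq_cop : IsCoprime p q :=
      ⟨y3 - x3, x3 + y3, by linear_combination hxy3 + x3 * hqp + y3 * hqp2⟩
    -- measure
    have hdne : d ≠ 0 := by
      intro h0; rw [h0] at hd4; simp at hd4; nlinarith [sq_nonneg a]
    have hdabs1 : 1 ≤ |d| := Int.one_le_abs (by simpa using hdne)
    have habs4 : |d| ^ 4 = d ^ 4 := by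
      rw [← abs_pow, abs_of_nonneg (by positivity)]
    have hdle : |d| ≤ |d| ^ 4 := le_self_pow₀ hdabs1 (by norm_num)
    have hdC : |d| < C := by linarith
    have hmeasure : d.natAbs < C.natAbs := by
      have := Int.natAbs_lt_natAbs_of_nonneg_of_lt (abs_nonneg d) hdC
      rwa [Int.natAbs_abs] at this
    -- final parity split on p
    rcases Int.even_or_odd p with hpe | hpo
    · obtain ⟨p₀, hp0⟩ := hpe
      have hp0q : p₀ * q = e ^ 4 := by
        have h4 : 2 * (p₀ * q) = 2 * (e ^ 4) := by linear_combination hpq - q * hp0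
        exact mul_left_cancel₀ two_ne_zero h4
      have hp0cop : IsCoprime p₀ q := by
        have : IsCoprime (2 * p₀) q := by
          rwa [show (2 : ℤ) * p₀ = p₀ + p₀ by ring, ← hp0]
        exact this.of_mul_left_right
      have hp0pos : 0 < p₀ := by linarith
      obtain ⟨s, hs⟩ := eq_fourth_of_coprime hp0cop hp0pos hp0q
      obtain ⟨r, hr⟩ := eq_fourth_of_coprime (w := e) hp0cop.symm hqpos (by linear_combination hp0q)
      refine ⟨r, s, d, by rw [← hr, ← hs]; linarith, fun h0 => ?_, hmeasure⟩
      subst h0; simp at hs; omega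
    · have hqe : Even q := by
        rcases Int.even_or_odd q with h' | h'
        · exact h'
        · exfalso
          have : Even (d ^ 2) := by rw [← hqp2]; exact h'.add_odd hpo
          exact (Int.not_odd_iff_even.mpr this) (hd_odd.pow (n := 2))
      obtain ⟨q₀, hq0⟩ := hqe
      have hq0p : q₀ * p = e ^ 4 := by
        have h4 : 2 * (q₀ * p) = 2 * (e ^ 4) := by linear_combination hpq - p * hq0
        exact mul_left_cancel₀ two_ne_zero h4
      have hq0cop : IsCoprime q₀ p := by
        have : IsCoprime (2 * q₀) p := by
          rwa [show (2 : ℤ) * q₀ = q₀ + q₀ by ring, ← hq0, isCoprime_comm]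
        exact this.of_mul_left_right
      have hq0pos : 0 < q₀ := by linarith
      obtain ⟨s, hs⟩ := eq_fourth_of_coprime hq0cop hq0pos hq0p
      obtain ⟨r, hr⟩ := eq_fourth_of_coprime (w := e) hq0cop.symm hppos (by linear_combination hq0p)
      refine ⟨r, s, d, by rw [← hr, ← hs]; linarith, fun h0 => ?_, hmeasure⟩
      subst h0; simp at hs; omega
  · -- bad case: u odd, leads to contradiction mod 8
    exfalso
    obtain ⟨k, hk⟩ := id huo
    have h2u : IsCoprime (2 : ℤ) u := ⟨-k, 1, by linear_combination hk⟩
    have h8u : IsCoprime (8 : ℤ) u := by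
      have := h2u.pow_left (m := 3); norm_num at this; exact this
    have h8v : (8 : ℤ) ∣ v := h8u.dvd_of_dvd_mul_left ⟨b₁ ^ 4, by linarith⟩
    obtain ⟨v₁, hv1⟩ := h8v
    have hv1u : v₁ * u = b₁ ^ 4 := by
      have h4 : (8 : ℤ) * (v₁ * u) = 8 * (b₁ ^ 4) := by linear_combination huv8 - u * hv1
      exact mul_left_cancel₀ (by norm_num) h4
    have hv1cop : IsCoprime v₁ u := by
      have : IsCoprime (8 * v₁) u := by rwa [← hv1, isCoprime_comm]
      exact this.of_mul_left_right
    have hv1pos : 0 < v₁ := by nlinarith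
    obtain ⟨e, he⟩ := eq_fourth_of_coprime hv1cop hv1pos hv1u
    obtain ⟨d, hdu⟩ := eq_fourth_of_coprime (w := b₁) hv1cop.symm hupos (by linear_combination hv1u)
    have hd_odd : Odd d := by
      rcases Int.even_or_odd d with h' | h'
      · exact absurd (hdu ▸ (Int.even_pow.mpr ⟨h', by norm_num⟩)) (Int.not_even_iff_odd.mpr huo)
      · exact h'
    have hkey : a ^ 2 + d ^ 4 = 8 * e ^ 4 := by
      rw [← hdu, ← he]; linarith
    have h1 := odd_sq_mod8 ha_odd
    have h2 : d ^ 4 % 8 = 1 := by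
      have := odd_sq_mod8 (hd_odd.pow (n := 2))
      rwa [show (d ^ 2) ^ 2 = d ^ 4 by ring] at this
    exact mod8_contra _ _ _ h1 h2 hkey

private lemma int_key : ∀ n : ℕ, ∀ a b c : ℤ, c.natAbs = n → a ^ 4 + 2 * b ^ 4 = c ^ 2 → b = 0 := by
  intro n
  induction n using Nat.strong_induction_on with
  | _ n ih =>
    intro a b c hn h
    by_contra hb
    have hb4 : 0 < b ^ 4 := by positivity
    have hcne : c ≠ 0 := by
      intro h0
      rw [h0] at h
      have h4 : (0:ℤ) ≤ a ^ 4 := by positivity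
      linarith
    set C := |c| with hCdef
    have hC : a ^ 4 + 2 * b ^ 4 = C ^ 2 := by rw [hCdef, sq_abs]; exact h
    have hCpos : 0 < C := abs_pos.mpr hcne
    have hCn : C.natAbs = n := by rw [hCdef, Int.natAbs_abs]; exact hn
    rcases eq_or_ne (Int.gcd a b) 1 with hg | hg
    · have hab : IsCoprime a b := Int.isCoprime_iff_gcd_eq_one.mpr hg
      obtain ⟨r, s, d, hd, hs, hlt⟩ := descent_step hab hb hCpos hC
      rw [hCn] at hlt
      exact hs (ih _ hlt r s d rfl hd)
    · have hgne : Int.gcd a b ≠ 0 := fun h0 => hb (Int.natAbs_eq_zero.mp (Nat.eq_zero_of_gcd_eq_zero_right h0))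
      have h2g : 2 ≤ Int.gcd a b := by omega
      set g : ℤ := (Int.gcd a b : ℤ) with hgdef
      have hg0 : g ≠ 0 := Int.natCast_ne_zero.mpr hgne
      obtain ⟨a₁, ha1⟩ := Int.gcd_dvd_left (a := a) (b := b)
      obtain ⟨b₁, hb1⟩ := Int.gcd_dvd_right (a := a) (b := b)
      have hdvd : (g ^ 2) ^ 2 ∣ C ^ 2 :=
        ⟨a₁ ^ 4 + 2 * b₁ ^ 4, by
          linear_combination -hC + (a ^ 3 + a ^ 2 * (g * a₁) + a * (g * a₁) ^ 2 +
            (g * a₁) ^ 3) * ha1 + 2 * (b ^ 3 + b ^ 2 * (g * b₁) + b * (g * b₁) ^ 2 +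
            (g * b₁) ^ 3) * hb1⟩
      have hgC : g ^ 2 ∣ C := (Int.pow_dvd_pow_iff (by norm_num : (2:ℕ) ≠ 0)).mp hdvd
      obtain ⟨C₁, hC1⟩ := hgC
      have heq1 : a₁ ^ 4 + 2 * b₁ ^ 4 = C₁ ^ 2 := by
        have h4 : g ^ 4 * (a₁ ^ 4 + 2 * b₁ ^ 4) = g ^ 4 * C₁ ^ 2 := by
          linear_combination hC - (a ^ 3 + a ^ 2 * (g * a₁) + a * (g * a₁) ^ 2 +
            (g * a₁) ^ 3) * ha1 - 2 * (b ^ 3 + b ^ 2 * (g * b₁) + b * (g * b₁) ^ 2 +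
            (g * b₁) ^ 3) * hb1 + (C + g ^ 2 * C₁) * hC1
        exact mul_left_cancel₀ (pow_ne_zero 4 hg0) h4
      have hb1ne : b₁ ≠ 0 := by rintro rfl; rw [mul_zero] at hb1; exact hb hb1
      have hC1ne : C₁ ≠ 0 := by
        rintro rfl
        have : 0 < b₁ ^ 4 := by positivity
        nlinarith [sq_nonneg (a₁ ^ 2), heq1]
      have hmul : C.natAbs = (g ^ 2).natAbs * C₁.natAbs := by rw [hC1, Int.natAbs_mul]
      have hgn : (g ^ 2).natAbs = (Int.gcd a b) ^ 2 := by
        rw [Int.natAbs_pow, hgdef, Int.natAbs_natCast]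
      have h1le : 1 ≤ C₁.natAbs := Int.natAbs_pos.mpr hC1ne
      have h4g : 4 ≤ a.gcd b ^ 2 := by nlinarith
      have hlt : C₁.natAbs < n := by
        rw [← hCn, hmul, hgn]
        calc C₁.natAbs < 4 * C₁.natAbs := by omega
          _ ≤ a.gcd b ^ 2 * C₁.natAbs := Nat.mul_le_mul_right _ h4g
      exact hb1ne (ih _ hlt a₁ b₁ C₁ rfl heq1)

theorem no_nontrivial_rational_x4_add_two_y4_eq_z2 (x y z : ℚ)
    (h : x ^ 4 + 2 * y ^ 4 = z ^ 2) : y = 0 := by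
  set a : ℤ := x.num * y.den * z.den with ha
  set b : ℤ := (x.den : ℤ) * y.num * z.den with hbdef
  set c : ℤ := z.num * z.den * (x.den : ℤ) ^ 2 * (y.den : ℤ) ^ 2 with hc
  have hxd : ((x.den : ℤ) : ℚ) ≠ 0 := by exact_mod_cast x.den_nz
  have hyd : ((y.den : ℤ) : ℚ) ≠ 0 := by exact_mod_cast y.den_nz
  have hzd : ((z.den : ℤ) : ℚ) ≠ 0 := by exact_mod_cast z.den_nz
  have hxd' : ((x.den : ℚ)) ≠ 0 := by exact_mod_cast x.den_nz
  have hyd' : ((y.den : ℚ)) ≠ 0 := by exact_mod_cast y.den_nz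
  have hzd' : ((z.den : ℚ)) ≠ 0 := by exact_mod_cast z.den_nz
  have hx : (x.num : ℚ) = x * x.den := (div_eq_iff hxd').mp (Rat.num_div_den x)
  have hy : (y.num : ℚ) = y * y.den := (div_eq_iff hyd').mp (Rat.num_div_den y)
  have hz : (z.num : ℚ) = z * z.den := (div_eq_iff hzd').mp (Rat.num_div_den z)
  have key : a ^ 4 + 2 * b ^ 4 = c ^ 2 := by
    have : ((a ^ 4 + 2 * b ^ 4 : ℤ) : ℚ) = ((c ^ 2 : ℤ) : ℚ) := by
      push_cast [ha, hbdef, hc]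
      rw [hx, hy, hz]
      linear_combination ((x.den : ℚ) * y.den * z.den) ^ 4 * h
    exact_mod_cast this
  have hb0 : b = 0 := int_key c.natAbs a b c rfl key
  rw [hbdef] at hb0
  have hnum : y.num = 0 := by
    rcases mul_eq_zero.mp hb0 with h' | h'
    · rcases mul_eq_zero.mp h' with h'' | h''
      · exact absurd h'' (by exact_mod_cast x.den_nz)
      · exact h''
    · exact absurd h' (by exact_mod_cast z.den_nz)
  exact Rat.num_eq_zero.mp hnum
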